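/- arXiv:1901.03734 — 3 statements merged into one kernel-verified Lean document; each statement's English description precedes it below -/
import Mathlib

section
/- For any r, the almost Riordan array A_r = ((1+x(r-1))/(1-x); 1/(1-x)^2, x/(1-x)) is a pseudo-involution in the group of almost Riordan arrays of order 1: its inverse equals (1 - rx/(1+x); 1/(1+x)^2, x/(1+x)), which is obtained from A_r by the sign change a(x) ↦ a(-x), g(x) ↦ g(-x), f(x) ↦ -f(-x). -/
open PowerSeries

/-- Composition f ∘ g of formal power series (intended for g with zero constant term). -/
noncomputable def comp (f g : ℚ⟦X⟧) : ℚ⟦X⟧ :=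
  PowerSeries.mk fun n => ∑ k ∈ Finset.range (n + 1),
    PowerSeries.coeff k f * PowerSeries.coeff n (g ^ k)

/-- (f(x) - f(0))/x. -/
noncomputable def shift (f : ℚ⟦X⟧) : ℚ⟦X⟧ := PowerSeries.mk fun n => PowerSeries.coeff (n + 1) f

/-- Action of the almost Riordan array (a; g, f) on a power series b. -/
noncomputable def aact (a g f b : ℚ⟦X⟧) : ℚ⟦X⟧ :=
  PowerSeries.C (PowerSeries.constantCoeff b) * a + PowerSeries.X * g * comp (shift b) f

/-- Product in the group of almost Riordan arrays of order 1 (triples (a; g, f)). -/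
noncomputable def amul (M N : ℚ⟦X⟧ × ℚ⟦X⟧ × ℚ⟦X⟧) : ℚ⟦X⟧ × ℚ⟦X⟧ × ℚ⟦X⟧ :=
  (aact M.1 M.2.1 M.2.2 N.1, M.2.1 * comp N.2.1 M.2.2, comp N.2.2 M.2.2)

/-- Product in the Riordan group (pairs (g, f)). -/
noncomputable def rmul (M N : ℚ⟦X⟧ × ℚ⟦X⟧) : ℚ⟦X⟧ × ℚ⟦X⟧ :=
  (M.1 * comp N.1 M.2, comp N.2 M.2)
open Finset

section API
lemma coeff_pow_zero' {g : ℚ⟦X⟧} (hg : constantCoeff g = 0) {n k : ℕ} (h : n < k) :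
    PowerSeries.coeff n (g ^ k) = 0 :=
  PowerSeries.X_pow_dvd_iff.mp (pow_dvd_pow_of_dvd (PowerSeries.X_dvd_iff.mpr hg) k) n h

lemma comp_coeff' {g f : ℚ⟦X⟧} (hg : constantCoeff g = 0) {n N : ℕ} (h : n < N) :
    PowerSeries.coeff n (comp f g) =
      ∑ k ∈ range N, PowerSeries.coeff k f * PowerSeries.coeff n (g ^ k) := by
  rw [comp, coeff_mk]
  apply Finset.sum_subset
  · intro k hk; simp only [mem_range] at *; omega
  · intro k hk1 hk2
    simp only [mem_range, not_lt] at hk2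
    rw [coeff_pow_zero' hg (by omega), mul_zero]

lemma comp_C' (c : ℚ) (g : ℚ⟦X⟧) : comp (PowerSeries.C c) g = PowerSeries.C c := by
  ext n
  rw [comp, coeff_mk, Finset.sum_eq_single 0]
  · simp [PowerSeries.coeff_C]
  · intro k _ hk; simp [PowerSeries.coeff_C, hk]
  · intro h; simp at h

lemma comp_one' (g : ℚ⟦X⟧) : comp 1 g = 1 := by
  rw [← map_one (PowerSeries.C), comp_C', map_one]

lemma comp_X' {g : ℚ⟦X⟧} (hg : constantCoeff g = 0) : comp X g = g := by
  ext n
  rw [comp, coeff_mk]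
  rcases n with _ | m
  · simpa [PowerSeries.coeff_X] using hg.symm
  · rw [Finset.sum_eq_single 1]
    · simp
    · intro k _ hk; simp [PowerSeries.coeff_X, hk]
    · intro h; simp at h

lemma comp_add' (f₁ f₂ g : ℚ⟦X⟧) : comp (f₁ + f₂) g = comp f₁ g + comp f₂ g := by
  ext n; simp [comp, add_mul, Finset.sum_add_distrib]

lemma comp_neg' (f g : ℚ⟦X⟧) : comp (-f) g = -comp f g := by
  ext n; simp [comp, Finset.sum_neg_distrib]

lemma comp_sub' (f₁ f₂ g : ℚ⟦X⟧) : comp (f₁ - f₂) g = comp f₁ g - comp f₂ g := by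
  rw [sub_eq_add_neg, comp_add', comp_neg', sub_eq_add_neg]

lemma comp_C_mul' (c : ℚ) (f g : ℚ⟦X⟧) :
    comp (PowerSeries.C c * f) g = PowerSeries.C c * comp f g := by
  ext n; simp [comp, Finset.mul_sum, mul_assoc]

lemma comp_mul' {g : ℚ⟦X⟧} (hg : constantCoeff g = 0) (a b : ℚ⟦X⟧) :
    comp (a * b) g = comp a g * comp b g := by
  ext n
  set c : ℕ → ℚ := fun j => PowerSeries.coeff n (g ^ j) with hc
  have hcz : ∀ j, n < j → c j = 0 := fun j h => coeff_pow_zero' hg h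
  set F : ℕ × ℕ → ℚ := fun p =>
    PowerSeries.coeff p.1 a * PowerSeries.coeff p.2 b * c (p.1 + p.2) with hF
  have hR : PowerSeries.coeff n (comp a g * comp b g)
      = ∑ p ∈ range (n + 1) ×ˢ range (n + 1), F p := by
    rw [Finset.sum_product, PowerSeries.coeff_mul]
    have step : ∀ p ∈ antidiagonal n,
        PowerSeries.coeff p.1 (comp a g) * PowerSeries.coeff p.2 (comp b g)
        = ∑ k ∈ range (n + 1), ∑ l ∈ range (n + 1),
            PowerSeries.coeff k a * PowerSeries.coeff l b *
              (PowerSeries.coeff p.1 (g ^ k) * PowerSeries.coeff p.2 (g ^ l)) := by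
      intro p hp
      have h1 : p.1 < n + 1 := Nat.lt_succ_of_le (Finset.HasAntidiagonal.antidiagonal.fst_le hp)
      have h2 : p.2 < n + 1 := Nat.lt_succ_of_le (Finset.HasAntidiagonal.antidiagonal.snd_le hp)
      rw [comp_coeff' hg h1, comp_coeff' hg h2, Finset.sum_mul_sum]
      exact Finset.sum_congr rfl fun k _ => Finset.sum_congr rfl fun l _ => by ring
    rw [Finset.sum_congr rfl step, Finset.sum_comm]
    refine Finset.sum_congr rfl fun k _ => ?_
    rw [Finset.sum_comm]
    refine Finset.sum_congr rfl fun l _ => ?_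
    rw [← Finset.mul_sum, ← PowerSeries.coeff_mul, ← pow_add]
  have hL : PowerSeries.coeff n (comp (a * b) g)
      = ∑ m ∈ range (n + 1), ∑ p ∈ antidiagonal m, F p := by
    rw [comp_coeff' hg (Nat.lt_succ_self n)]
    refine Finset.sum_congr rfl fun m _ => ?_
    rw [PowerSeries.coeff_mul, Finset.sum_mul]
    refine Finset.sum_congr rfl fun p hp => ?_
    rw [Finset.HasAntidiagonal.mem_antidiagonal] at hp
    simp only [hF, hp, hc]
  rw [hL, hR]
  have hdisj : (↑(range (n + 1)) : Set ℕ).PairwiseDisjoint antidiagonal := by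
    intro m1 _ m2 _ hne
    simp only [Finset.disjoint_left]
    intro p hp1 hp2
    rw [Finset.HasAntidiagonal.mem_antidiagonal] at hp1 hp2
    exact hne (hp1 ▸ hp2)
  rw [← Finset.sum_biUnion hdisj]
  apply Finset.sum_subset
  · intro p hp
    simp only [mem_biUnion, Finset.HasAntidiagonal.mem_antidiagonal, mem_range, mem_product] at *
    obtain ⟨m, hm, rfl⟩ := hp
    omega
  · intro p hp hnp
    simp only [mem_biUnion, Finset.HasAntidiagonal.mem_antidiagonal, mem_range, not_exists, not_and] at hnp
    have : n < p.1 + p.2 := by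
      by_contra h
      exact hnp (p.1 + p.2) (by omega) rfl
    simp only [hF, hcz _ this, mul_zero]


lemma shift_C_add_X_mul (c : ℚ) (s : ℚ⟦X⟧) : shift (PowerSeries.C c + X * s) = s := by
  ext n
  rw [shift, coeff_mk, map_add, PowerSeries.coeff_C, PowerSeries.coeff_succ_X_mul]
  simp

lemma cc_C_add_X_mul (c : ℚ) (s : ℚ⟦X⟧) :
    constantCoeff (PowerSeries.C c + X * s) = c := by
  simp [map_add, map_mul]

lemma rescale_neg_one_C (c : ℚ) :
    PowerSeries.rescale (-1) (PowerSeries.C c) = PowerSeries.C c := by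
  ext n
  rcases n with _ | n <;> simp [PowerSeries.coeff_rescale, PowerSeries.coeff_C]

end API


/-- A_r = ((1+(r-1)x)/(1-x); 1/(1-x)^2, x/(1-x)) is a pseudo-involution in the group
of almost Riordan arrays of order 1: its inverse is (1 - rx/(1+x); 1/(1+x)^2, x/(1+x)),
which is obtained from A_r by a ↦ a(-x), g ↦ g(-x), f ↦ -f(-x). -/
theorem Ar_pseudo_involution (r : ℚ) :
    let A : ℚ⟦X⟧ × ℚ⟦X⟧ × ℚ⟦X⟧ :=
      ((1 + PowerSeries.C (r - 1) * X) * (1 - X)⁻¹, (1 - X)⁻¹ ^ 2, X * (1 - X)⁻¹)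
    let B : ℚ⟦X⟧ × ℚ⟦X⟧ × ℚ⟦X⟧ :=
      (1 - PowerSeries.C r * X * (1 + X)⁻¹, (1 + X)⁻¹ ^ 2, X * (1 + X)⁻¹)
    amul A B = (1, 1, X) ∧ amul B A = (1, 1, X) ∧
    B.1 = PowerSeries.rescale (-1) A.1 ∧
    B.2.1 = PowerSeries.rescale (-1) A.2.1 ∧
    B.2.2 = -PowerSeries.rescale (-1) A.2.2 := by
  intro A B
  set u : ℚ⟦X⟧ := (1 - X)⁻¹ with hu_def
  set v : ℚ⟦X⟧ := (1 + X)⁻¹ with hv_def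
  have hu : (1 - X : ℚ⟦X⟧) * u = 1 := PowerSeries.mul_inv_cancel _ (by simp)
  have hv : (1 + X : ℚ⟦X⟧) * v = 1 := PowerSeries.mul_inv_cancel _ (by simp)
  have hccf : constantCoeff (X * u) = 0 := by simp [map_mul]
  have hccfb : constantCoeff (X * v) = 0 := by simp [map_mul]
  -- composition with f = X * u
  have c1 : comp (1 + X) (X * u) = u := by
    rw [comp_add', comp_one', comp_X' hccf]; linear_combination -hu
  have c2 : comp v (X * u) = 1 - X := by
    have hq : u * comp v (X * u) = 1 := by
      have h := comp_mul' hccf (1 + X) v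
      rw [hv, comp_one', c1] at h
      exact h.symm
    linear_combination (1 - X) * hq - comp v (X * u) * hu
  have c3 : comp (X * v) (X * u) = X := by
    rw [comp_mul' hccf, comp_X' hccf, c2]
    linear_combination X * hu
  have c4 : comp (v ^ 2) (X * u) = (1 - X) ^ 2 := by
    rw [pow_two, pow_two, comp_mul' hccf, c2]
  -- composition with fb = X * v
  have d1 : comp (1 - X) (X * v) = v := by
    rw [comp_sub', comp_one', comp_X' hccfb]; linear_combination -hv
  have d2 : comp u (X * v) = 1 + X := by
    have hq : v * comp u (X * v) = 1 := by
      have h := comp_mul' hccfb (1 - X) u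
      rw [hu, comp_one', d1] at h
      exact h.symm
    linear_combination (1 + X) * hq - comp u (X * v) * hv
  have d3 : comp (X * u) (X * v) = X := by
    rw [comp_mul' hccfb, comp_X' hccfb, d2]
    linear_combination X * hv
  have d4 : comp (u ^ 2) (X * v) = (1 + X) ^ 2 := by
    rw [pow_two, pow_two, comp_mul' hccfb, d2]
  -- normal forms
  have hB1 : (1 : ℚ⟦X⟧) - PowerSeries.C r * X * v
      = PowerSeries.C 1 + X * (-(PowerSeries.C r * v)) := by
    rw [map_one]; ring
  have hA1 : (1 + PowerSeries.C (r - 1) * X) * u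
      = PowerSeries.C 1 + X * (PowerSeries.C r * u) := by
    rw [map_one, map_sub, map_one]; linear_combination hu
  have hru : PowerSeries.rescale (-1) u = v := by
    have h := congrArg (PowerSeries.rescale (-1)) hu
    rw [map_mul, map_sub, map_one, PowerSeries.rescale_neg_one_X] at h
    linear_combination v * h - PowerSeries.rescale (-1) u * hv
  refine ⟨?_, ?_, ?_, ?_, ?_⟩
  · show (aact ((1 + PowerSeries.C (r - 1) * X) * u) (u ^ 2) (X * u)
        (1 - PowerSeries.C r * X * v),
      u ^ 2 * comp (v ^ 2) (X * u), comp (X * v) (X * u)) = (1, 1, X)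
    refine Prod.ext ?_ (Prod.ext ?_ ?_)
    · show PowerSeries.C (constantCoeff (1 - PowerSeries.C r * X * v)) *
          ((1 + PowerSeries.C (r - 1) * X) * u) +
          X * (u ^ 2) * comp (shift (1 - PowerSeries.C r * X * v)) (X * u) = 1
      rw [hB1, cc_C_add_X_mul, shift_C_add_X_mul, comp_neg', comp_C_mul', c2]
      simp only [map_one, map_sub]
      linear_combination (1 - PowerSeries.C r * X * u) * hu
    · show u ^ 2 * comp (v ^ 2) (X * u) = 1
      rw [c4]; linear_combination ((1 - X) * u + 1) * hu
    · exact c3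
  · show (aact (1 - PowerSeries.C r * X * v) (v ^ 2) (X * v)
        ((1 + PowerSeries.C (r - 1) * X) * u),
      v ^ 2 * comp (u ^ 2) (X * v), comp (X * u) (X * v)) = (1, 1, X)
    refine Prod.ext ?_ (Prod.ext ?_ ?_)
    · show PowerSeries.C (constantCoeff ((1 + PowerSeries.C (r - 1) * X) * u)) *
          (1 - PowerSeries.C r * X * v) +
          X * (v ^ 2) * comp (shift ((1 + PowerSeries.C (r - 1) * X) * u)) (X * v) = 1
      rw [hA1, cc_C_add_X_mul, shift_C_add_X_mul, comp_C_mul', d2]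
      simp only [map_one]
      linear_combination PowerSeries.C r * X * v * hv
    · show v ^ 2 * comp (u ^ 2) (X * v) = 1
      rw [d4]; linear_combination ((1 + X) * v + 1) * hv
    · exact d3
  · show (1 : ℚ⟦X⟧) - PowerSeries.C r * X * v
      = PowerSeries.rescale (-1) ((1 + PowerSeries.C (r - 1) * X) * u)
    rw [map_mul, map_add, map_one, map_mul, rescale_neg_one_C,
      PowerSeries.rescale_neg_one_X, hru]
    simp only [map_sub, map_one]
    linear_combination -hv
  · show (v ^ 2 : ℚ⟦X⟧) = PowerSeries.rescale (-1) (u ^ 2)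
    rw [map_pow, hru]
  · show X * v = -PowerSeries.rescale (-1) (X * u)
    rw [map_mul, PowerSeries.rescale_neg_one_X, hru]
    ring
end

section
/- If (g,f) is a pseudo-involution in the Riordan group (i.e., the inverse of (g,f) equals (g(-x), -f(-x))), then (1; g, f) is a pseudo-involution in the group of almost Riordan arrays of order 1. -/
open PowerSeries

lemma shift_one : shift (1 : ℚ⟦X⟧) = 0 := by
  ext n
  simp [shift, PowerSeries.coeff_one]

lemma comp_zero (f : ℚ⟦X⟧) : comp 0 f = 0 := by
  ext n
  simp [comp]

lemma aact_one (a g f : ℚ⟦X⟧) : aact a g f 1 = a := by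
  simp [aact, shift_one, comp_zero]

/-- If (g,f) is a pseudo-involution in the Riordan group (its inverse is (g(-x), -f(-x))),
then (1; g, f) is a pseudo-involution in the group of almost Riordan arrays of order 1. -/
theorem one_g_f_pseudo_involution (g f : ℚ⟦X⟧)
    (hg0 : PowerSeries.constantCoeff g = 1)
    (hf0 : PowerSeries.constantCoeff f = 0)
    (hf1 : PowerSeries.coeff 1 f = 1)
    (h1 : rmul (g, f) (PowerSeries.rescale (-1) g, -PowerSeries.rescale (-1) f) = (1, X))
    (h2 : rmul (PowerSeries.rescale (-1) g, -PowerSeries.rescale (-1) f) (g, f) = (1, X)) :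
    amul (1, g, f) (1, PowerSeries.rescale (-1) g, -PowerSeries.rescale (-1) f) = (1, 1, X) ∧
    amul (1, PowerSeries.rescale (-1) g, -PowerSeries.rescale (-1) f) (1, g, f) = (1, 1, X) := by
  have e1 := congrArg Prod.fst h1
  have e1' := congrArg Prod.snd h1
  have e2 := congrArg Prod.fst h2
  have e2' := congrArg Prod.snd h2
  simp only [rmul] at e1 e1' e2 e2'
  constructor <;> simp [amul, aact_one, e1, e1', e2, e2']
end

section
/- The Riordan array (1/(1-4x^2), x/√(1-4x^2)) is a quasi-involution: its inverse equals (1/(1+4x^2), x/√(1+4x^2)). -/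
open PowerSeries

namespace QI

lemma coeff_pow_zero {g : ℚ⟦X⟧} (hg : constantCoeff g = 0)
    {n k : ℕ} (h : n < k) : coeff n (g ^ k) = 0 :=
  PowerSeries.X_pow_dvd_iff.mp (pow_dvd_pow_of_dvd (PowerSeries.X_dvd_iff.mpr hg) k) n h

lemma coeff_comp_eval {g : ℚ⟦X⟧} (hg : constantCoeff g = 0) (f : ℚ⟦X⟧)
    {n N : ℕ} (hN : n < N) :
    coeff n (comp f g) = ∑ k ∈ Finset.range N, coeff k f * coeff n (g ^ k) := by
  rw [comp, coeff_mk]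
  refine Finset.sum_subset (Finset.range_subset_range.mpr hN) ?_
  intro k _ hk'
  simp only [Finset.mem_range, not_lt] at hk'
  rw [coeff_pow_zero hg (lt_of_lt_of_le (Nat.lt_succ_self n) hk'), mul_zero]

lemma coeff_eval₂ (g : ℚ⟦X⟧) (P : Polynomial ℚ) {n N : ℕ} (hP : P.natDegree < N) :
    coeff n (Polynomial.eval₂ C g P)
      = ∑ k ∈ Finset.range N, P.coeff k * coeff n (g ^ k) := by
  rw [Polynomial.eval₂_eq_sum_range' C hP g, map_sum]
  simp [coeff_C_mul]

lemma comp_eq_eval {g : ℚ⟦X⟧} (hg : constantCoeff g = 0) (f : ℚ⟦X⟧)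
    {n N : ℕ} (hn : n < N) :
    coeff n (comp f g) = coeff n (Polynomial.eval₂ C g (trunc N f)) := by
  set M := max N ((trunc N f).natDegree + 1) with hM
  rw [coeff_comp_eval hg f (lt_of_lt_of_le hn (le_max_left _ _)),
    coeff_eval₂ g _ (lt_of_lt_of_le (Nat.lt_succ_self _) (le_max_right _ _))]
  refine Finset.sum_congr rfl ?_
  intro k hk
  rcases lt_or_ge k N with h1 | h1
  · rw [coeff_trunc, if_pos h1]
  · rw [coeff_pow_zero hg (lt_of_lt_of_le hn h1), mul_zero, mul_zero]

lemma comp_mul {g : ℚ⟦X⟧} (hg : constantCoeff g = 0) (a b : ℚ⟦X⟧) :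
    comp (a * b) g = comp a g * comp b g := by
  ext n
  rw [comp_eq_eval hg (a * b) (Nat.lt_succ_self n)]
  have h2 : coeff n (Polynomial.eval₂ C g (trunc (n+1) (a*b)))
      = coeff n (Polynomial.eval₂ C g (trunc (n+1) a * trunc (n+1) b)) := by
    set M := max (max ((trunc (n+1) (a*b)).natDegree + 1)
      ((trunc (n+1) a * trunc (n+1) b).natDegree + 1)) (n+1) with hM
    rw [coeff_eval₂ g _ (N := M) (lt_of_lt_of_le (Nat.lt_succ_self _)
        (le_trans (le_max_left _ _) (le_max_left _ _))),
      coeff_eval₂ g _ (N := M) (lt_of_lt_of_le (Nat.lt_succ_self _)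
        (le_trans (le_max_right _ _) (le_max_left _ _)))]
    refine Finset.sum_congr rfl ?_
    intro k hk
    rcases lt_or_ge k (n+1) with h1 | h1
    · rw [coeff_trunc, if_pos h1, coeff_mul_eq_coeff_trunc_mul_trunc a b h1,
        ← Polynomial.coe_mul, Polynomial.coeff_coe]
    · rw [coeff_pow_zero hg (lt_of_lt_of_le (Nat.lt_succ_self n) h1), mul_zero, mul_zero]
  rw [h2, Polynomial.eval₂_mul, PowerSeries.coeff_mul, PowerSeries.coeff_mul]
  refine Finset.sum_congr rfl ?_
  intro p hp
  rw [Finset.HasAntidiagonal.mem_antidiagonal] at hp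
  have hp1 : p.1 < n + 1 := Nat.lt_succ_of_le (hp ▸ Nat.le_add_right p.1 p.2)
  have hp2 : p.2 < n + 1 := Nat.lt_succ_of_le (hp ▸ Nat.le_add_left p.2 p.1)
  rw [← comp_eq_eval hg a hp1, ← comp_eq_eval hg b hp2]

lemma comp_add (a b g : ℚ⟦X⟧) : comp (a + b) g = comp a g + comp b g := by
  ext n
  simp [comp, add_mul, Finset.sum_add_distrib]

lemma comp_C (r : ℚ) (g : ℚ⟦X⟧) : comp (C r) g = C r := by
  ext n
  rw [comp, coeff_mk, Finset.sum_eq_single 0]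
  · simp [PowerSeries.coeff_C, PowerSeries.coeff_one]
  · intro k _ hk; simp [PowerSeries.coeff_C, hk]
  · intro h; exact absurd (Finset.mem_range.mpr (Nat.succ_pos n)) h

lemma comp_one (g : ℚ⟦X⟧) : comp 1 g = 1 := by
  have := comp_C 1 g; simpa using this

lemma comp_X {g : ℚ⟦X⟧} (hg : constantCoeff g = 0) : comp X g = g := by
  ext n
  rw [comp, coeff_mk]
  rcases n with _ | n
  · have h0 : coeff 0 g = 0 := by rw [coeff_zero_eq_constantCoeff_apply]; exact hg
    simp [PowerSeries.coeff_X, h0]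
  · rw [Finset.sum_eq_single 1]
    · simp
    · intro k _ hk; simp [PowerSeries.coeff_X, hk]
    · intro h; exact absurd (Finset.mem_range.mpr (by omega)) h

lemma constantCoeff_comp (f g : ℚ⟦X⟧) :
    constantCoeff (comp f g) = constantCoeff f := by
  rw [← coeff_zero_eq_constantCoeff_apply, comp, coeff_mk]
  simp

lemma key (a : ℚ) (s t : ℚ⟦X⟧) (hs0 : constantCoeff s = 1)
    (hs : s ^ 2 = 1 - C a * X ^ 2)
    (ht0 : constantCoeff t = 1) (ht : t ^ 2 = 1 + C a * X ^ 2) :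
    rmul ((1 - C a * X ^ 2 : ℚ⟦X⟧)⁻¹, X * s⁻¹) ((1 + C a * X ^ 2)⁻¹, X * t⁻¹)
      = (1, X) := by
  have hg : constantCoeff (X * s⁻¹) = 0 := by simp
  have hs0' : constantCoeff s ≠ 0 := by rw [hs0]; exact one_ne_zero
  have ht0' : constantCoeff t ≠ 0 := by rw [ht0]; exact one_ne_zero
  have hA0 : constantCoeff (1 - C a * X ^ 2 : ℚ⟦X⟧) = 1 := by simp
  have hB0 : constantCoeff (1 + C a * X ^ 2 : ℚ⟦X⟧) = 1 := by simp
  have hA0' : constantCoeff (1 - C a * X ^ 2 : ℚ⟦X⟧) ≠ 0 := by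
    rw [hA0]; exact one_ne_zero
  have hB0' : constantCoeff (1 + C a * X ^ 2 : ℚ⟦X⟧) ≠ 0 := by
    rw [hB0]; exact one_ne_zero
  have hsinv : s * s⁻¹ = 1 := PowerSeries.mul_inv_cancel s hs0'
  have htinv : t * t⁻¹ = 1 := PowerSeries.mul_inv_cancel t ht0'
  have hAinv : (1 - C a * X ^ 2 : ℚ⟦X⟧) * (1 - C a * X ^ 2)⁻¹ = 1 :=
    PowerSeries.mul_inv_cancel _ hA0'
  have hBinv : (1 + C a * X ^ 2 : ℚ⟦X⟧) * (1 + C a * X ^ 2)⁻¹ = 1 :=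
    PowerSeries.mul_inv_cancel _ hB0'
  have hAs : (1 - C a * X ^ 2 : ℚ⟦X⟧) * (s⁻¹) ^ 2 = 1 := by
    rw [← hs, ← mul_pow, hsinv, one_pow]
  -- comp B g = 1 + C a * g^2
  have hB' : (1 + C a * X ^ 2 : ℚ⟦X⟧) = 1 + C a * (X * X) := by ring
  have e1 : comp (1 + C a * X ^ 2) (X * s⁻¹)
      = 1 + C a * (X * s⁻¹) ^ 2 := by
    rw [hB', comp_add, comp_one, comp_mul hg, comp_mul hg, comp_C, comp_X hg, ← sq]
  have hcompB : (1 - C a * X ^ 2 : ℚ⟦X⟧) * comp (1 + C a * X ^ 2) (X * s⁻¹) = 1 := by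
    have h : (1 - C a * X ^ 2 : ℚ⟦X⟧) * (1 + C a * (X * s⁻¹) ^ 2)
        = (1 - C a * X ^ 2) + C a * X ^ 2 * ((1 - C a * X ^ 2) * (s⁻¹) ^ 2) := by
      ring
    rw [e1, h, hAs, mul_one]; ring
  -- comp B g = (s⁻¹)^2
  have hAne : (1 - C a * X ^ 2 : ℚ⟦X⟧) ≠ 0 := by
    intro h; rw [h] at hA0; simp at hA0
  have hs2 : comp (1 + C a * X ^ 2) (X * s⁻¹) = (s⁻¹) ^ 2 := by
    have h : (1 - C a * X ^ 2 : ℚ⟦X⟧)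
        * (comp (1 + C a * X ^ 2) (X * s⁻¹) - (s⁻¹) ^ 2) = 0 := by
      rw [mul_sub, hcompB, hAs, sub_self]
    rcases mul_eq_zero.mp h with h' | h'
    · exact absurd h' hAne
    · exact sub_eq_zero.mp h'
  -- u = s⁻¹
  have hu2 : comp t (X * s⁻¹) ^ 2 = (s⁻¹) ^ 2 := by
    rw [sq, ← comp_mul hg, ← sq, ht, hs2]
  have hsinv0 : constantCoeff (s⁻¹) = 1 := by
    rw [PowerSeries.constantCoeff_inv, hs0, inv_one]
  have hu : comp t (X * s⁻¹) = s⁻¹ := by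
    have hfac : (comp t (X * s⁻¹) - s⁻¹) * (comp t (X * s⁻¹) + s⁻¹) = 0 := by
      linear_combination hu2
    rcases mul_eq_zero.mp hfac with h' | h'
    · exact sub_eq_zero.mp h'
    · exfalso
      have h0 : constantCoeff (comp t (X * s⁻¹) + s⁻¹) = 2 := by
        rw [map_add, constantCoeff_comp, ht0, hsinv0]; norm_num
      rw [h', map_zero] at h0
      norm_num at h0
  -- first component
  have hcompBinv : comp (1 + C a * X ^ 2)⁻¹ (X * s⁻¹) = 1 - C a * X ^ 2 := by
    have h1 : comp (1 + C a * X ^ 2) (X * s⁻¹) * comp (1 + C a * X ^ 2)⁻¹ (X * s⁻¹)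
        = 1 := by
      rw [← comp_mul hg, hBinv, comp_one]
    calc comp (1 + C a * X ^ 2)⁻¹ (X * s⁻¹)
        = ((1 - C a * X ^ 2 : ℚ⟦X⟧) * comp (1 + C a * X ^ 2) (X * s⁻¹))
          * comp (1 + C a * X ^ 2)⁻¹ (X * s⁻¹) := by rw [hcompB, one_mul]
      _ = (1 - C a * X ^ 2 : ℚ⟦X⟧)
          * (comp (1 + C a * X ^ 2) (X * s⁻¹) * comp (1 + C a * X ^ 2)⁻¹ (X * s⁻¹)) := by
          ring
      _ = 1 - C a * X ^ 2 := by rw [h1, mul_one]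
  -- second component
  have hcompt : comp t⁻¹ (X * s⁻¹) = s := by
    have h2 : comp t (X * s⁻¹) * comp t⁻¹ (X * s⁻¹) = 1 := by
      rw [← comp_mul hg, htinv, comp_one]
    rw [hu] at h2
    calc comp t⁻¹ (X * s⁻¹) = (s * s⁻¹) * comp t⁻¹ (X * s⁻¹) := by rw [hsinv, one_mul]
      _ = s * (s⁻¹ * comp t⁻¹ (X * s⁻¹)) := by ring
      _ = s := by rw [h2, mul_one]
  have hsecond : comp (X * t⁻¹) (X * s⁻¹) = X := by
    rw [comp_mul hg, comp_X hg, hcompt]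
    calc X * s⁻¹ * s = X * (s * s⁻¹) := by ring
      _ = X := by rw [hsinv, mul_one]
  have hfirst : (1 - C a * X ^ 2 : ℚ⟦X⟧)⁻¹ * comp (1 + C a * X ^ 2)⁻¹ (X * s⁻¹) = 1 := by
    rw [hcompBinv, mul_comm, hAinv]
  rw [rmul]
  exact Prod.ext hfirst hsecond

end QI

/-- (1/(1-4x^2), x/√(1-4x^2)) is a quasi-involution: its inverse is
(1/(1+4x^2), x/√(1+4x^2)). -/
theorem quasi_involution_one (s t : ℚ⟦X⟧)
    (hs0 : PowerSeries.constantCoeff s = 1) (hs : s ^ 2 = 1 - 4 * X ^ 2)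
    (ht0 : PowerSeries.constantCoeff t = 1) (ht : t ^ 2 = 1 + 4 * X ^ 2) :
    rmul ((1 - 4 * X ^ 2 : ℚ⟦X⟧)⁻¹, X * s⁻¹) ((1 + 4 * X ^ 2)⁻¹, X * t⁻¹) = (1, X) ∧
    rmul ((1 + 4 * X ^ 2 : ℚ⟦X⟧)⁻¹, X * t⁻¹) ((1 - 4 * X ^ 2)⁻¹, X * s⁻¹) = (1, X) := by
  have hC4 : C (4 : ℚ) = (4 : ℚ⟦X⟧) := by
    simp [map_ofNat]
  constructor
  · rw [show (4 : ℚ⟦X⟧) = C 4 from hC4.symm]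
    exact QI.key 4 s t hs0 (by rw [hC4]; exact hs) ht0 (by rw [hC4]; exact ht)
  · have e1 : (1 + 4 * X ^ 2 : ℚ⟦X⟧) = 1 - C (-4) * X ^ 2 := by
      rw [map_neg, hC4]; ring
    have e2 : (1 - 4 * X ^ 2 : ℚ⟦X⟧) = 1 + C (-4) * X ^ 2 := by
      rw [map_neg, hC4]; ring
    rw [e1, e2]
    exact QI.key (-4) t s ht0 (by rw [← e1]; exact ht) hs0 (by rw [← e2]; exact hs)
end
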